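/- In the homogeneous latent-variable model (K_i = K, ν ≤ K ≤ 1) with observations X_1,…,X_n and stationary distribution of the joint chain, the normalized log-likelihood difference satisfies the bounded differences property: changing a single observation X_{q̃} to any other value changes Z_π(X_{1:n}) := (1/n)Σ_{q=1}^{n}[log P_π(X_q|X_{q+1:n}) − E[log P_π(X_q|X_{q+1:n})]] by at most (1/n)·Σ_{q=1}^{q̃} ν^{-1}(1−ν)^{q̃−q−1} ≤ c/(ν²n) for a universal constant c. -/

import Mathlib

open MeasureTheory

/-- `betaAux π K x m i v` : conditional probability of observing `x i, …, x (i+m-1)`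
given that the latent variable with index `i` equals `v`, in the model where the
latent variables are i.i.d. with law `π` and `P(X_i = y | V) = K i y V_i V_{i+1}`. -/
noncomputable def betaAux {V 𝕏 : Type*} [MeasurableSpace V] (π : Measure V)
    (K : ℕ → 𝕏 → V → V → ℝ) (x : ℕ → 𝕏) : ℕ → ℕ → V → ℝ
  | 0, _, _ => 1
  | m + 1, i, v => ∫ w, K i (x i) v w * betaAux π K x m (i + 1) w ∂π

/-- Marginal likelihood `P(X_q = x_q, …, X_n = x_n)`. -/
noncomputable def margP {V 𝕏 : Type*} [MeasurableSpace V] (π : Measure V)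
    (K : ℕ → 𝕏 → V → V → ℝ) (x : ℕ → 𝕏) (q n : ℕ) : ℝ :=
  ∫ v, betaAux π K x (n + 1 - q) q v ∂π

/-- Conditional probability `P(X_q = x_q | X_{q+1:n} = x_{q+1:n})`. -/
noncomputable def condP {V 𝕏 : Type*} [MeasurableSpace V] (π : Measure V)
    (K : ℕ → 𝕏 → V → V → ℝ) (x : ℕ → 𝕏) (q n : ℕ) : ℝ :=
  margP π K x q n / margP π K x (q + 1) n

section Aux

variable {V 𝕏 : Type} [MeasurableSpace V]

private lemma aux_integrable (π : Measure V) [IsProbabilityMeasure π] {f : V → ℝ}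
    (hf : Measurable f) {C : ℝ} (h0 : ∀ w, 0 ≤ f w) (h1 : ∀ w, f w ≤ C) :
    Integrable f π := by
  refine (integrable_const C).mono' hf.aestronglyMeasurable ?_
  filter_upwards with w
  rw [Real.norm_eq_abs, abs_of_nonneg (h0 w)]
  exact h1 w

private lemma beta_meas (π : Measure V) [IsProbabilityMeasure π] (K : 𝕏 → V → V → ℝ)
    (hKm : ∀ y : 𝕏, Measurable fun p : V × V => K y p.1 p.2) (x : ℕ → 𝕏) :
    ∀ m i, Measurable (betaAux π (fun _ => K) x m i) := by
  intro m
  induction m with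
  | zero => intro i; simp only [betaAux]; exact measurable_const
  | succ m ih =>
    intro i
    have hf : Measurable fun p : V × V =>
        K (x i) p.1 p.2 * betaAux π (fun _ => K) x m (i + 1) p.2 :=
      (hKm (x i)).mul ((ih (i + 1)).comp measurable_snd)
    simpa only [betaAux] using hf.stronglyMeasurable.integral_prod_right'.measurable

private lemma beta_bounds (π : Measure V) [IsProbabilityMeasure π] (K : 𝕏 → V → V → ℝ)
    (ν : ℝ) (hKm : ∀ y : 𝕏, Measurable fun p : V × V => K y p.1 p.2)
    (hν0 : 0 < ν) (hν1 : ν ≤ 1)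
    (hKν : ∀ y v w, ν ≤ K y v w) (hK1 : ∀ y v w, K y v w ≤ 1) (x : ℕ → 𝕏) :
    ∀ m i v, ν ^ m ≤ betaAux π (fun _ => K) x m i v ∧ betaAux π (fun _ => K) x m i v ≤ 1 := by
  intro m
  induction m with
  | zero => intro i v; simp [betaAux]
  | succ m ih =>
    intro i v
    have hmeasw : Measurable fun w => K (x i) v w * betaAux π (fun _ => K) x m (i + 1) w :=
      ((hKm (x i)).comp (measurable_prodMk_left)).mul (beta_meas π K hKm x m (i + 1))
    have h0 : ∀ w, 0 ≤ K (x i) v w * betaAux π (fun _ => K) x m (i + 1) w := fun w =>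
      mul_nonneg (hν0.le.trans (hKν _ _ _))
        ((pow_pos hν0 m).le.trans (ih (i + 1) w).1)
    have h1 : ∀ w, K (x i) v w * betaAux π (fun _ => K) x m (i + 1) w ≤ 1 := fun w =>
      mul_le_one₀ (hK1 _ _ _) ((pow_pos hν0 m).le.trans (ih (i + 1) w).1) (ih (i + 1) w).2
    have hint : Integrable (fun w => K (x i) v w * betaAux π (fun _ => K) x m (i + 1) w) π :=
      aux_integrable π hmeasw h0 h1
    have hbeta : betaAux π (fun _ => K) x (m + 1) i v
        = ∫ w, K (x i) v w * betaAux π (fun _ => K) x m (i + 1) w ∂π := rfl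
    constructor
    · rw [hbeta]
      calc ν ^ (m + 1) = ∫ _, ν ^ (m + 1) ∂π := by simp
        _ ≤ ∫ w, K (x i) v w * betaAux π (fun _ => K) x m (i + 1) w ∂π := by
            refine integral_mono (integrable_const _) hint fun w => ?_
            calc ν ^ (m + 1) = ν * ν ^ m := by ring
              _ ≤ K (x i) v w * betaAux π (fun _ => K) x m (i + 1) w :=
                  mul_le_mul (hKν _ _ _) (ih (i + 1) w).1 (pow_pos hν0 m).le
                    (hν0.le.trans (hKν _ _ _))
    · rw [hbeta]
      calc ∫ w, K (x i) v w * betaAux π (fun _ => K) x m (i + 1) w ∂π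
          ≤ ∫ _, (1 : ℝ) ∂π := integral_mono hint (integrable_const _) h1
        _ = 1 := by simp

private lemma beta_congr (π : Measure V) [IsProbabilityMeasure π] (K : 𝕏 → V → V → ℝ)
    (x xt : ℕ → 𝕏) :
    ∀ m i, (∀ k, i ≤ k → x k = xt k) →
      betaAux π (fun _ => K) x m i = betaAux π (fun _ => K) xt m i := by
  intro m
  induction m with
  | zero => intro i _; rfl
  | succ m ih =>
    intro i h
    funext v
    show (∫ w, K (x i) v w * betaAux π (fun _ => K) x m (i + 1) w ∂π)
      = ∫ w, K (xt i) v w * betaAux π (fun _ => K) xt m (i + 1) w ∂π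
    rw [h i le_rfl, ih (i + 1) fun k hk => h k (by omega)]

private lemma beta_compare (π : Measure V) [IsProbabilityMeasure π] (K : 𝕏 → V → V → ℝ)
    (ν : ℝ) (hKm : ∀ y : 𝕏, Measurable fun p : V × V => K y p.1 p.2)
    (hν0 : 0 < ν) (hν1 : ν ≤ 1)
    (hKν : ∀ y v w, ν ≤ K y v w) (hK1 : ∀ y v w, K y v w ≤ 1)
    (x xt : ℕ → 𝕏) (qt : ℕ) (hxt : ∀ k, k ≠ qt → xt k = x k) :
    ∀ m i v, betaAux π (fun _ => K) x m i v ≤ ν⁻¹ * betaAux π (fun _ => K) xt m i v := by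
  have hinv1 : (1 : ℝ) ≤ ν⁻¹ := by
    rw [le_inv_comm₀ one_pos hν0]; simpa using hν1
  intro m
  induction m with
  | zero => intro i v; simpa [betaAux] using hinv1
  | succ m ih =>
    intro i v
    have hb := beta_bounds π K ν hKm hν0 hν1 hKν hK1
    have hnnx : ∀ j w, 0 ≤ betaAux π (fun _ => K) x m j w := fun j w =>
      (pow_pos hν0 m).le.trans (hb x m j w).1
    have hnnxt : ∀ j w, 0 ≤ betaAux π (fun _ => K) xt m j w := fun j w =>
      (pow_pos hν0 m).le.trans (hb xt m j w).1
    have hpt : ∀ w, K (x i) v w * betaAux π (fun _ => K) x m (i + 1) w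
        ≤ ν⁻¹ * (K (xt i) v w * betaAux π (fun _ => K) xt m (i + 1) w) := by
      intro w
      by_cases hi : i = qt
      · subst hi
        have heq : betaAux π (fun _ => K) x m (i + 1) = betaAux π (fun _ => K) xt m (i + 1) :=
          beta_congr π K x xt m (i + 1) fun k hk => (hxt k (by omega)).symm
        rw [heq]
        have h1 : (1 : ℝ) ≤ ν⁻¹ * K (xt i) v w := by
          have := mul_le_mul_of_nonneg_left (hKν (xt i) v w) (inv_nonneg.mpr hν0.le)
          rwa [inv_mul_cancel₀ hν0.ne'] at this
        calc K (x i) v w * betaAux π (fun _ => K) xt m (i + 1) w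
            ≤ 1 * betaAux π (fun _ => K) xt m (i + 1) w :=
              mul_le_mul_of_nonneg_right (hK1 _ _ _) (hnnxt _ w)
          _ ≤ (ν⁻¹ * K (xt i) v w) * betaAux π (fun _ => K) xt m (i + 1) w :=
              mul_le_mul_of_nonneg_right h1 (hnnxt _ w)
          _ = ν⁻¹ * (K (xt i) v w * betaAux π (fun _ => K) xt m (i + 1) w) := by ring
      · rw [hxt i hi]
        calc K (x i) v w * betaAux π (fun _ => K) x m (i + 1) w
            ≤ K (x i) v w * (ν⁻¹ * betaAux π (fun _ => K) xt m (i + 1) w) :=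
              mul_le_mul_of_nonneg_left (ih (i + 1) w) (hν0.le.trans (hKν _ _ _))
          _ = ν⁻¹ * (K (x i) v w * betaAux π (fun _ => K) xt m (i + 1) w) := by ring
    have hmx : Measurable fun w => K (x i) v w * betaAux π (fun _ => K) x m (i + 1) w :=
      ((hKm (x i)).comp (measurable_prodMk_left)).mul (beta_meas π K hKm x m (i + 1))
    have hmxt : Measurable fun w =>
        ν⁻¹ * (K (xt i) v w * betaAux π (fun _ => K) xt m (i + 1) w) :=
      (((hKm (xt i)).comp (measurable_prodMk_left)).mul
        (beta_meas π K hKm xt m (i + 1))).const_mul _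
    have hix : Integrable (fun w => K (x i) v w * betaAux π (fun _ => K) x m (i + 1) w) π :=
      aux_integrable π hmx
        (fun w => mul_nonneg (hν0.le.trans (hKν _ _ _)) (hnnx _ w))
        (fun w => mul_le_one₀ (hK1 _ _ _) (hnnx _ w) (hb x m (i + 1) w).2)
    have hixt : Integrable
        (fun w => ν⁻¹ * (K (xt i) v w * betaAux π (fun _ => K) xt m (i + 1) w)) π :=
      aux_integrable π hmxt
        (fun w => mul_nonneg (inv_nonneg.mpr hν0.le)
          (mul_nonneg (hν0.le.trans (hKν _ _ _)) (hnnxt _ w)))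
        (fun w => by
          have : K (xt i) v w * betaAux π (fun _ => K) xt m (i + 1) w ≤ 1 :=
            mul_le_one₀ (hK1 _ _ _) (hnnxt _ w) (hb xt m (i + 1) w).2
          calc ν⁻¹ * (K (xt i) v w * betaAux π (fun _ => K) xt m (i + 1) w)
              ≤ ν⁻¹ * 1 := mul_le_mul_of_nonneg_left this (inv_nonneg.mpr hν0.le)
            _ ≤ ν⁻¹ := by simp)
    show (∫ w, K (x i) v w * betaAux π (fun _ => K) x m (i + 1) w ∂π)
      ≤ ν⁻¹ * ∫ w, K (xt i) v w * betaAux π (fun _ => K) xt m (i + 1) w ∂π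
    rw [← integral_const_mul]
    exact integral_mono hix hixt hpt

private lemma margP_pos (π : Measure V) [IsProbabilityMeasure π] (K : 𝕏 → V → V → ℝ)
    (ν : ℝ) (hKm : ∀ y : 𝕏, Measurable fun p : V × V => K y p.1 p.2)
    (hν0 : 0 < ν) (hν1 : ν ≤ 1)
    (hKν : ∀ y v w, ν ≤ K y v w) (hK1 : ∀ y v w, K y v w ≤ 1) (x : ℕ → 𝕏) (q n : ℕ) :
    0 < margP π (fun _ => K) x q n := by
  have hb := beta_bounds π K ν hKm hν0 hν1 hKν hK1 x (n + 1 - q) q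
  have hint : Integrable (betaAux π (fun _ => K) x (n + 1 - q) q) π :=
    aux_integrable π (beta_meas π K hKm x _ _)
      (fun w => (pow_pos hν0 _).le.trans (hb w).1) (fun w => (hb w).2)
  have : ν ^ (n + 1 - q) ≤ margP π (fun _ => K) x q n := by
    unfold margP
    calc ν ^ (n + 1 - q) = ∫ _, ν ^ (n + 1 - q) ∂π := by simp
      _ ≤ _ := integral_mono (integrable_const _) hint fun w => (hb w).1
  exact (pow_pos hν0 _).trans_le this

private lemma margP_compare (π : Measure V) [IsProbabilityMeasure π] (K : 𝕏 → V → V → ℝ)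
    (ν : ℝ) (hKm : ∀ y : 𝕏, Measurable fun p : V × V => K y p.1 p.2)
    (hν0 : 0 < ν) (hν1 : ν ≤ 1)
    (hKν : ∀ y v w, ν ≤ K y v w) (hK1 : ∀ y v w, K y v w ≤ 1)
    (x xt : ℕ → 𝕏) (qt : ℕ) (hxt : ∀ k, k ≠ qt → xt k = x k) (q n : ℕ) :
    margP π (fun _ => K) x q n ≤ ν⁻¹ * margP π (fun _ => K) xt q n := by
  have hb := beta_bounds π K ν hKm hν0 hν1 hKν hK1
  have hintx : Integrable (betaAux π (fun _ => K) x (n + 1 - q) q) π :=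
    aux_integrable π (beta_meas π K hKm x _ _)
      (fun w => (pow_pos hν0 _).le.trans (hb x _ q w).1) (fun w => (hb x _ q w).2)
  have hintxt : Integrable (fun v => ν⁻¹ * betaAux π (fun _ => K) xt (n + 1 - q) q v) π :=
    aux_integrable π ((beta_meas π K hKm xt _ _).const_mul _)
      (fun w => mul_nonneg (inv_nonneg.mpr hν0.le)
        ((pow_pos hν0 _).le.trans (hb xt _ q w).1))
      (fun w => by
        calc ν⁻¹ * betaAux π (fun _ => K) xt (n + 1 - q) q w ≤ ν⁻¹ * 1 :=
            mul_le_mul_of_nonneg_left (hb xt _ q w).2 (inv_nonneg.mpr hν0.le)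
          _ ≤ ν⁻¹ := by simp)
  unfold margP
  rw [← integral_const_mul]
  exact integral_mono hintx hintxt
    (beta_compare π K ν hKm hν0 hν1 hKν hK1 x xt qt hxt (n + 1 - q) q)

private lemma tele_sum (f : ℕ → ℝ) : ∀ n : ℕ,
    ∑ q ∈ Finset.Icc 1 n, (f q - f (q + 1)) = f 1 - f (n + 1) := by
  intro n
  induction n with
  | zero => simp
  | succ n ih =>
    rw [← Finset.Ico_add_one_right_eq_Icc, Finset.sum_Ico_succ_top (by omega), Finset.Ico_add_one_right_eq_Icc, ih]
    ring

end Aux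

/-- Bounded differences property of the normalized log-likelihood: since the
expectation terms of `Z_π` cancel, changing one observation changes
`Z_π(X_{1:n}) = (1/n) Σ_q [log P_π(X_q|X_{q+1:n}) − E log P_π(X_q|X_{q+1:n})]`
by exactly the displayed quantity. -/
theorem Z_bounded_difference :
    ∃ c > (0 : ℝ),
      ∀ (V 𝕏 : Type) (_ : MeasurableSpace V) (_ : Countable 𝕏)
        (π : Measure V), IsProbabilityMeasure π →
      ∀ (K : 𝕏 → V → V → ℝ) (ν : ℝ),
        (∀ y : 𝕏, Measurable fun p : V × V => K y p.1 p.2) →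
        (∀ v w : V, HasSum (fun y : 𝕏 => K y v w) 1) →
        0 < ν → ν ≤ 1 →
        (∀ (y : 𝕏) (v w : V), ν ≤ K y v w) →
        (∀ (y : 𝕏) (v w : V), K y v w ≤ 1) →
      ∀ (x xt : ℕ → 𝕏) (n qt : ℕ), 1 ≤ qt → qt ≤ n →
        (∀ k, k ≠ qt → xt k = x k) →
        |(1 / (n : ℝ)) * ∑ q ∈ Finset.Icc 1 n,
            (Real.log (condP π (fun _ => K) x q n)
              - Real.log (condP π (fun _ => K) xt q n))|
          ≤ (1 / (n : ℝ)) * ∑ q ∈ Finset.Icc 1 qt, ν⁻¹ * (1 - ν) ^ (qt - q - 1) ∧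
        (1 / (n : ℝ)) * ∑ q ∈ Finset.Icc 1 qt, ν⁻¹ * (1 - ν) ^ (qt - q - 1)
          ≤ c / (ν ^ 2 * n) := by
  refine ⟨2, two_pos, ?_⟩
  intro V 𝕏 _ _ π hπ K ν hKm _ hν0 hν1 hKν hK1 x xt n qt hqt1 hqtn hxt
  haveI := hπ
  have hxt' : ∀ k, k ≠ qt → x k = xt k := fun k hk => (hxt k hk).symm
  have hn1 : (1 : ℝ) ≤ (n : ℝ) := by exact_mod_cast hqt1.trans hqtn
  have hn0 : (0 : ℝ) < (n : ℝ) := lt_of_lt_of_le one_pos hn1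
  have hinv1 : (1 : ℝ) ≤ ν⁻¹ := by
    rw [le_inv_comm₀ one_pos hν0]; simpa using hν1
  have hmp : ∀ (y : ℕ → 𝕏) (q : ℕ), 0 < margP π (fun _ => K) y q n := fun y q =>
    margP_pos π K ν hKm hν0 hν1 hKν hK1 y q n
  -- the sum telescopes
  set g : ℕ → ℝ := fun q =>
    Real.log (margP π (fun _ => K) x q n) - Real.log (margP π (fun _ => K) xt q n) with hg
  have hsum : ∑ q ∈ Finset.Icc 1 n,
      (Real.log (condP π (fun _ => K) x q n) - Real.log (condP π (fun _ => K) xt q n))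
      = g 1 - g (n + 1) := by
    rw [← tele_sum g n]
    refine Finset.sum_congr rfl fun q _ => ?_
    unfold condP
    rw [Real.log_div (hmp x q).ne' (hmp x (q + 1)).ne',
        Real.log_div (hmp xt q).ne' (hmp xt (q + 1)).ne']
    simp only [hg]
    ring
  have hmargtop : ∀ y : ℕ → 𝕏, margP π (fun _ => K) y (n + 1) n = 1 := by
    intro y
    unfold margP
    rw [Nat.sub_self]
    simp [betaAux]
  have hgtop : g (n + 1) = 0 := by
    simp only [hg, hmargtop x, hmargtop xt, Real.log_one, sub_zero]
  -- bound |g 1| ≤ ν⁻¹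
  have hcmp1 : margP π (fun _ => K) x 1 n ≤ ν⁻¹ * margP π (fun _ => K) xt 1 n :=
    margP_compare π K ν hKm hν0 hν1 hKν hK1 x xt qt hxt 1 n
  have hcmp2 : margP π (fun _ => K) xt 1 n ≤ ν⁻¹ * margP π (fun _ => K) x 1 n :=
    margP_compare π K ν hKm hν0 hν1 hKν hK1 xt x qt hxt' 1 n
  have hloginv : Real.log ν⁻¹ ≤ ν⁻¹ := by
    have := Real.log_le_sub_one_of_pos (inv_pos.mpr hν0)
    linarith
  have habsg : |g 1| ≤ ν⁻¹ := by
    have h1 : Real.log (margP π (fun _ => K) x 1 n)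
        ≤ Real.log ν⁻¹ + Real.log (margP π (fun _ => K) xt 1 n) := by
      rw [← Real.log_mul (by positivity) (hmp xt 1).ne']
      exact Real.log_le_log (hmp x 1) hcmp1
    have h2 : Real.log (margP π (fun _ => K) xt 1 n)
        ≤ Real.log ν⁻¹ + Real.log (margP π (fun _ => K) x 1 n) := by
      rw [← Real.log_mul (by positivity) (hmp x 1).ne']
      exact Real.log_le_log (hmp xt 1) hcmp2
    rw [abs_le]
    constructor <;> simp only [hg] <;> linarith
  -- the RHS sum is at least ν⁻¹
  have hterm_nonneg : ∀ q ∈ Finset.Icc 1 qt, (0 : ℝ) ≤ ν⁻¹ * (1 - ν) ^ (qt - q - 1) :=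
    fun q _ => mul_nonneg (inv_nonneg.mpr hν0.le) (pow_nonneg (by linarith) _)
  have hsum_ge : ν⁻¹ ≤ ∑ q ∈ Finset.Icc 1 qt, ν⁻¹ * (1 - ν) ^ (qt - q - 1) := by
    have hmem : qt ∈ Finset.Icc 1 qt := Finset.mem_Icc.mpr ⟨hqt1, le_rfl⟩
    have := Finset.single_le_sum hterm_nonneg hmem
    simpa [Nat.sub_self] using this
  constructor
  · rw [hsum, hgtop, sub_zero, abs_mul, abs_of_nonneg (by positivity : (0:ℝ) ≤ 1 / (n:ℝ))]
    exact mul_le_mul_of_nonneg_left (habsg.trans hsum_ge) (by positivity)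
  · -- the RHS sum is at most 2/ν
    have hgeom : ∑ q ∈ Finset.Icc 1 qt, (1 - ν) ^ (qt - q - 1) ≤ 2 * ν⁻¹ := by
      set r : ℝ := 1 - ν with hr
      have hr0 : 0 ≤ r := by simp [hr]; linarith
      have hr1 : r < 1 := by simp [hr]; linarith
      have hre : ∑ q ∈ Finset.Icc 1 qt, r ^ (qt - q - 1)
          = ∑ i ∈ Finset.range qt, r ^ (qt - 1 - i - 1) := by
        rw [← Finset.Ico_add_one_right_eq_Icc, Finset.sum_Ico_eq_sum_range]
        refine Finset.sum_congr (by simp) fun i hi => ?_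
        congr 1
        omega
      have hrefl : ∑ i ∈ Finset.range qt, r ^ (qt - 1 - i - 1)
          = ∑ i ∈ Finset.range qt, r ^ (i - 1) :=
        Finset.sum_range_reflect (fun j => r ^ (j - 1)) qt
      rw [hre, hrefl]
      have hbound : ∑ i ∈ Finset.range qt, r ^ (i - 1)
          ≤ ∑ i ∈ Finset.range (qt + 1), r ^ (i - 1) := by
        rw [Finset.sum_range_succ]
        nlinarith [pow_nonneg hr0 (qt - 1)]
      refine hbound.trans ?_
      rw [Finset.sum_range_succ']
      have hgs : ∑ i ∈ Finset.range qt, r ^ (i + 1 - 1) ≤ ν⁻¹ := by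
        have h1 : ∑ i ∈ Finset.range qt, r ^ i ≤ ∑' i : ℕ, r ^ i :=
          Summable.sum_le_tsum _ (fun i _ => pow_nonneg hr0 i) (summable_geometric_of_lt_one hr0 hr1)
        rw [tsum_geometric_of_lt_one hr0 hr1] at h1
        have : (1 : ℝ) - r = ν := by simp [hr]
        rw [this] at h1
        simpa using h1
      simp only [Nat.zero_sub, pow_zero]
      linarith
    have hfinal : ∑ q ∈ Finset.Icc 1 qt, ν⁻¹ * (1 - ν) ^ (qt - q - 1) ≤ 2 / ν ^ 2 := by
      rw [← Finset.mul_sum]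
      calc ν⁻¹ * ∑ q ∈ Finset.Icc 1 qt, (1 - ν) ^ (qt - q - 1)
          ≤ ν⁻¹ * (2 * ν⁻¹) :=
            mul_le_mul_of_nonneg_left hgeom (inv_nonneg.mpr hν0.le)
        _ = 2 / ν ^ 2 := by field_simp
    calc (1 / (n : ℝ)) * ∑ q ∈ Finset.Icc 1 qt, ν⁻¹ * (1 - ν) ^ (qt - q - 1)
        ≤ (1 / (n : ℝ)) * (2 / ν ^ 2) :=
          mul_le_mul_of_nonneg_left hfinal (by positivity)
      _ = 2 / (ν ^ 2 * (n : ℝ)) := by field_simp
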